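/- For every p ∈ [1, ∞) there is a constant C > 0 such that for every n ≥ 2 and all real numbers a_{i,j} (1 ≤ i < j ≤ n), ∫₀¹ ‖ ∑_{1≤i<j≤n} ρ_{i,j}(u) a_{i,j} r_i r_j ‖_{L^p[0,1]} du ≤ C · ‖ ∑_{1≤i<j≤n} a_{i,j} r_i r_j ‖_{L^p[0,1]}. In other words, the Rademacher chaos of order 2, together with its biorthogonal coefficient functionals, is a system of random unconditional convergence (RUC system) in L^p[0,1]. -/

import Mathlib

open MeasureTheory ENNReal

/-- The Rademacher functions on `[0,1]`: `r k t = (-1)^⌊2^(k-1) t⌋` (for `k ≥ 1`). -/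
noncomputable def rademacher (k : ℕ) (t : ℝ) : ℝ :=
  (-1 : ℝ) ^ ⌊(2 : ℝ) ^ (k - 1) * t⌋

/-- Lebesgue measure on `[0,1]`. -/
noncomputable def lebI : Measure ℝ := volume.restrict (Set.Icc (0 : ℝ) 1)

/-- The Rademacher sequence reindexed by pairs: `ρ_{i,j}(u) = r_{(j−1)(j−2)/2+i}(u)`. -/
noncomputable def rho (i j : ℕ) (u : ℝ) : ℝ :=
  rademacher ((j - 1) * (j - 2) / 2 + i) u

/-- The Rademacher chaos of order 2 is a RUC system in `L^p[0,1]` for every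
`p ∈ [1,∞)`: the average over independent random signs of the `L^p`-norm of the
sign-randomized chaos sum is dominated by a constant multiple of the `L^p`-norm
of the original sum. -/

instance : IsProbabilityMeasure lebI :=
  ⟨by simp [lebI, Real.volume_Icc]⟩

lemma rademacher_pm (k : ℕ) (t : ℝ) : rademacher k t = 1 ∨ rademacher k t = -1 := by
  unfold rademacher
  rcases Int.even_or_odd ⌊(2:ℝ)^(k-1)*t⌋ with h | h
  · exact Or.inl h.neg_one_zpow
  · exact Or.inr h.neg_one_zpow

lemma rademacher_sq (k : ℕ) (t : ℝ) : rademacher k t ^ 2 = 1 := by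
  rcases rademacher_pm k t with h | h <;> rw [h] <;> norm_num

lemma rademacher_abs (k : ℕ) (t : ℝ) : |rademacher k t| ≤ 1 := by
  rcases rademacher_pm k t with h | h <;> rw [h] <;> norm_num

lemma rademacher_meas (k : ℕ) : Measurable (rademacher k) := by
  have h1 : Measurable fun t : ℝ => ⌊(2:ℝ)^(k-1)*t⌋ :=
    Int.measurable_floor.comp (measurable_const_mul _)
  exact (measurable_from_top (f := fun z : ℤ => (-1:ℝ)^z)).comp h1

/-- bounded measurable functions -/
def Bdd (f : ℝ → ℝ) : Prop := Measurable f ∧ ∃ C, ∀ t, |f t| ≤ C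

lemma Bdd.meas {f} (hf : Bdd f) : Measurable f := hf.1

lemma rademacher_bdd (k : ℕ) : Bdd (rademacher k) :=
  ⟨rademacher_meas k, 1, rademacher_abs k⟩

lemma Bdd.const (c : ℝ) : Bdd (fun _ => c) := ⟨measurable_const, |c|, fun _ => le_rfl⟩

lemma Bdd.add {f g} (hf : Bdd f) (hg : Bdd g) : Bdd (fun t => f t + g t) := by
  obtain ⟨mf, Cf, hCf⟩ := hf; obtain ⟨mg, Cg, hCg⟩ := hg
  exact ⟨mf.add mg, Cf + Cg, fun t => (abs_add_le _ _).trans (add_le_add (hCf t) (hCg t))⟩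

lemma Bdd.mul {f g} (hf : Bdd f) (hg : Bdd g) : Bdd (fun t => f t * g t) := by
  obtain ⟨mf, Cf, hCf⟩ := hf; obtain ⟨mg, Cg, hCg⟩ := hg
  refine ⟨mf.mul mg, Cf * Cg, fun t => ?_⟩
  rw [abs_mul]
  have h0 : (0:ℝ) ≤ Cf := (abs_nonneg _).trans (hCf t)
  exact mul_le_mul (hCf t) (hCg t) (abs_nonneg _) h0

lemma Bdd.neg {f} (hf : Bdd f) : Bdd (fun t => -f t) := by
  obtain ⟨mf, Cf, hCf⟩ := hf
  exact ⟨mf.neg, Cf, fun t => by rw [abs_neg]; exact hCf t⟩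

lemma Bdd.sub {f g} (hf : Bdd f) (hg : Bdd g) : Bdd (fun t => f t - g t) := by
  simpa [sub_eq_add_neg] using hf.add hg.neg

lemma Bdd.const_mul {f} (c : ℝ) (hf : Bdd f) : Bdd (fun t => c * f t) :=
  (Bdd.const c).mul hf

lemma Bdd.pow {f} (hf : Bdd f) (k : ℕ) : Bdd (fun t => f t ^ k) := by
  induction k with
  | zero => simpa using Bdd.const 1
  | succ k ih => simpa [pow_succ] using ih.mul hf

lemma Bdd.sum {ι : Type*} (s : Finset ι) (f : ι → ℝ → ℝ) (hf : ∀ i ∈ s, Bdd (f i)) :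
    Bdd (fun t => ∑ i ∈ s, f i t) := by
  classical
  induction s using Finset.induction_on with
  | empty => simpa using Bdd.const 0
  | insert a s hni ih =>
    rw [show (fun t => ∑ i ∈ insert a s, f i t) = fun t => f a t + ∑ i ∈ s, f i t by
      funext t; rw [Finset.sum_insert hni]]
    exact (hf a (Finset.mem_insert_self a s)).add
      (ih fun i hi => hf i (Finset.mem_insert_of_mem hi))

lemma Bdd.abs {f} (hf : Bdd f) : Bdd (fun t => |f t|) := by
  obtain ⟨mf, Cf, hCf⟩ := hf
  exact ⟨mf.abs, Cf, fun t => by rw [abs_abs]; exact hCf t⟩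

lemma Bdd.sqrt_abs {f} (hf : Bdd f) : Bdd (fun t => Real.sqrt |f t|) := by
  obtain ⟨mf, Cf, hCf⟩ := hf
  refine ⟨Real.continuous_sqrt.measurable.comp mf.abs, Real.sqrt Cf, fun t => ?_⟩
  rw [abs_of_nonneg (Real.sqrt_nonneg _)]
  exact Real.sqrt_le_sqrt (hCf t)

lemma Bdd.integrableOn {f} (hf : Bdd f) {s : Set ℝ} (hs : volume s < ⊤) :
    IntegrableOn f s volume := by
  obtain ⟨mf, Cf, hCf⟩ := hf
  haveI : IsFiniteMeasure (volume.restrict s) :=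
    ⟨by rwa [Measure.restrict_apply_univ]⟩
  exact ⟨mf.aestronglyMeasurable,
    HasFiniteIntegral.of_bounded (C := Cf) (ae_of_all _ fun t => by
      rw [Real.norm_eq_abs]; exact hCf t)⟩

lemma Bdd.integrable {f} (hf : Bdd f) : Integrable f lebI := by
  rw [lebI]
  exact hf.integrableOn (by simp [Real.volume_Icc])
-- PART 2

/-- functions constant on dyadic intervals of level `d` -/
def DyConst (d : ℕ) (g : ℝ → ℝ) : Prop :=
  ∀ j : ℕ, ∀ x ∈ Set.Ico ((j:ℝ)/2^d) (((j:ℝ)+1)/2^d), g x = g ((j:ℝ)/2^d)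

lemma DyConst.comp {d g} (φ : ℝ → ℝ) (hg : DyConst d g) : DyConst d (fun x => φ (g x)) :=
  fun j x hx => by dsimp only; rw [hg j x hx]

lemma DyConst.mul {d f g} (hf : DyConst d f) (hg : DyConst d g) :
    DyConst d (fun x => f x * g x) :=
  fun j x hx => by dsimp only; rw [hf j x hx, hg j x hx]

lemma DyConst.add {d f g} (hf : DyConst d f) (hg : DyConst d g) :
    DyConst d (fun x => f x + g x) :=
  fun j x hx => by dsimp only; rw [hf j x hx, hg j x hx]

lemma DyConst.const (d : ℕ) (c : ℝ) : DyConst d (fun _ => c) := fun _ _ _ => rfl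

lemma DyConst.sum {ι : Type*} {d} (s : Finset ι) (f : ι → ℝ → ℝ)
    (hf : ∀ i ∈ s, DyConst d (f i)) : DyConst d (fun t => ∑ i ∈ s, f i t) :=
  fun j x hx => Finset.sum_congr rfl fun i hi => hf i hi j x hx

lemma dy_endpoint (d j : ℕ) : ((j:ℝ)/2^d) ∈ Set.Ico ((j:ℝ)/2^d) (((j:ℝ)+1)/2^d) := by
  have hp : (0:ℝ) < 2^d := by positivity
  refine ⟨le_refl _, ?_⟩
  gcongr
  linarith

lemma DyConst.mono {d e : ℕ} (hde : d ≤ e) {g} (hg : DyConst d g) : DyConst e g := by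
  intro j x hx
  obtain ⟨hx1, hx2⟩ := hx
  set k := e - d with hk
  have he : e = d + k := by omega
  set q := j / 2^k with hq
  have hj1 : q * 2^k ≤ j := Nat.div_mul_le_self _ _
  have h2 : 0 < 2^k := pow_pos (by norm_num) k
  have hj2 : j < (q+1) * 2^k := by
    have hdm : 2^k * q + j % 2^k = j := Nat.div_add_mod j (2^k)
    have hml : j % 2^k < 2^k := Nat.mod_lt j h2
    have : (q+1) * 2^k = 2^k * q + 2^k := by ring
    rw [this]
    linarith
  have hp : (0:ℝ) < 2^d := by positivity
  have hpk : (0:ℝ) < 2^k := by positivity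
  have h2e : (2:ℝ)^e = 2^d * 2^k := by rw [he, pow_add]
  have key : ∀ y : ℝ, y ∈ Set.Ico ((j:ℝ)/2^e) (((j:ℝ)+1)/2^e) →
      y ∈ Set.Ico ((q:ℝ)/2^d) (((q:ℝ)+1)/2^d) := by
    intro y ⟨hy1, hy2⟩
    constructor
    · have hc : ((q:ℝ) * 2^k) ≤ (j:ℝ) := by exact_mod_cast hj1
      have h1 : ((q:ℝ) * 2^k) / (2^d * 2^k) ≤ (j:ℝ)/(2^d * 2^k) := by
        gcongr
      rw [mul_div_mul_right _ _ (ne_of_gt hpk)] at h1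
      calc ((q:ℝ))/2^d ≤ (j:ℝ)/(2^d*2^k) := h1
        _ ≤ y := by rwa [← h2e]
    · have hc : (j:ℝ) + 1 ≤ ((q:ℝ)+1) * 2^k := by exact_mod_cast hj2
      have h1 : ((j:ℝ)+1) / (2^d * 2^k) ≤ (((q:ℝ)+1) * 2^k)/(2^d * 2^k) := by
        gcongr
      rw [mul_div_mul_right _ _ (ne_of_gt hpk)] at h1
      calc y < ((j:ℝ)+1)/2^e := hy2
        _ = ((j:ℝ)+1)/(2^d*2^k) := by rw [h2e]
        _ ≤ ((q:ℝ)+1)/2^d := h1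
  have hxq := hg q x (key x ⟨hx1, hx2⟩)
  have hlq := hg q ((j:ℝ)/2^e) (key _ (dy_endpoint e j))
  rw [hxq, hlq]

lemma rademacher_dyconst (k : ℕ) : DyConst (k-1) (rademacher k) := by
  intro j x hx
  have hp : (0:ℝ) < 2^(k-1) := by positivity
  have hfl : ∀ y : ℝ, y ∈ Set.Ico ((j:ℝ)/2^(k-1)) (((j:ℝ)+1)/2^(k-1)) →
      ⌊(2:ℝ)^(k-1)*y⌋ = (j:ℤ) := by
    intro y ⟨h1, h2⟩
    rw [div_le_iff₀ hp] at h1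
    rw [lt_div_iff₀ hp] at h2
    rw [Int.floor_eq_iff]
    constructor
    · push_cast; linarith
    · push_cast; linarith
  unfold rademacher
  rw [hfl x hx, hfl ((j:ℝ)/2^(k-1)) (dy_endpoint (k-1) j)]

-- PART 3 : the vanishing integral

lemma integral_Ico_split (f : ℝ → ℝ) (hf : Bdd f) (h : ℝ) (hh : 0 ≤ h) :
    ∀ M : ℕ, ∫ t in Set.Ico 0 ((M:ℝ)*h), f t =
      ∑ j ∈ Finset.range M, ∫ t in Set.Ico ((j:ℝ)*h) (((j:ℝ)+1)*h), f t := by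
  intro M
  induction M with
  | zero => simp
  | succ M ih =>
    have h1 : (0:ℝ) ≤ (M:ℝ)*h := by positivity
    have h2 : (M:ℝ)*h ≤ ((M:ℝ)+1)*h := by nlinarith
    have hcast : ((M+1:ℕ):ℝ) = (M:ℝ)+1 := by push_cast; ring
    rw [hcast, ← Set.Ico_union_Ico_eq_Ico h1 h2,
      setIntegral_union (Set.Ico_disjoint_Ico.mpr (min_le_of_left_le (le_max_right _ _))) measurableSet_Ico
        (hf.integrableOn measure_Ico_lt_top) (hf.integrableOn (by simp [Real.volume_Ico])),
      ih, Finset.sum_range_succ]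

lemma integral_const_Ico (a b c : ℝ) (hab : a ≤ b) : ∫ t in Set.Ico a b, c = (b - a) * c := by
  rw [setIntegral_const, Real.volume_real_Ico_of_le hab, smul_eq_mul]

lemma radZ {n : ℕ} (hn : 2 ≤ n) {g : ℝ → ℝ} (hg : DyConst (n-2) g) (hb : Bdd g) :
    ∫ t, g t * rademacher n t ∂lebI = 0 := by
  have hrw : lebI = volume.restrict (Set.Ico (0:ℝ) 1) :=
    (Measure.restrict_congr_set Ico_ae_eq_Icc).symm
  set d := n - 2 with hd
  set h : ℝ := ((2:ℝ)^d)⁻¹ with hhdef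
  have hhpos : 0 < h := by positivity
  have hn1 : n - 1 = d + 1 := by omega
  have h2n1 : (2:ℝ)^(n-1) = 2^d * 2 := by rw [hn1, pow_succ]
  have hprod : Bdd (fun t => g t * rademacher n t) := hb.mul (rademacher_bdd n)
  -- the midpoint length
  set e : ℝ := ((2:ℝ)^d * 2)⁻¹ with hedef
  have hepos : 0 < e := by positivity
  have h2e : h = 2 * e := by
    rw [hhdef, hedef, mul_inv]
    ring
  have hbase : ∀ j : ℕ, (2:ℝ)^(n-1) * ((j:ℝ)*h) = 2*j := by
    intro j
    rw [h2n1, hhdef]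
    field_simp
  have he1 : (2:ℝ)^(n-1) * e = 1 := by
    rw [h2n1, hedef]
    field_simp
  have he2 : (2:ℝ)^(n-1) * h = 2 := by
    rw [h2n1, hhdef]
    field_simp
  have hp : (0:ℝ) < 2^(n-1) := by positivity
  have hval : ∀ j : ℕ, ∀ x ∈ Set.Ico ((j:ℝ)*h) ((j:ℝ)*h + e), rademacher n x = 1 := by
    intro j x ⟨hx1, hx2⟩
    have hfloor : ⌊(2:ℝ)^(n-1) * x⌋ = (2*j : ℤ) := by
      rw [Int.floor_eq_iff]
      constructor
      · push_cast
        calc ((2:ℝ)*j) = 2^(n-1) * ((j:ℝ)*h) := (hbase j).symm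
          _ ≤ 2^(n-1) * x := by nlinarith
      · push_cast
        have h5 : (2:ℝ)^(n-1) * x < 2^(n-1) * ((j:ℝ)*h + e) := by nlinarith
        calc (2:ℝ)^(n-1) * x < 2^(n-1)*((j:ℝ)*h) + 2^(n-1)*e := by
              linarith [h5, mul_add ((2:ℝ)^(n-1)) ((j:ℝ)*h) e]
          _ = 2*j + 1 := by rw [hbase j, he1]
    unfold rademacher
    rw [hfloor]
    exact Even.neg_one_zpow ⟨j, by ring⟩
  have hval2 : ∀ j : ℕ, ∀ x ∈ Set.Ico ((j:ℝ)*h + e) (((j:ℝ)+1)*h), rademacher n x = -1 := by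
    intro j x ⟨hx1, hx2⟩
    have hfloor : ⌊(2:ℝ)^(n-1) * x⌋ = (2*j+1 : ℤ) := by
      rw [Int.floor_eq_iff]
      constructor
      · push_cast
        calc ((2:ℝ)*j+1) = 2^(n-1) * ((j:ℝ)*h) + 2^(n-1)*e := by rw [hbase j, he1]
          _ = 2^(n-1) * ((j:ℝ)*h + e) := by ring
          _ ≤ 2^(n-1) * x := by nlinarith
      · push_cast
        have h5 : (2:ℝ)^(n-1) * x < 2^(n-1) * (((j:ℝ)+1)*h) := by nlinarith
        calc (2:ℝ)^(n-1) * x < 2^(n-1) * (((j:ℝ)+1)*h) := h5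
          _ = 2^(n-1)*((j:ℝ)*h) + 2^(n-1)*h := by ring
          _ = 2*j + 1 + 1 := by rw [hbase j, he2]; ring
    unfold rademacher
    rw [hfloor]
    exact Odd.neg_one_zpow ⟨j, by ring⟩
  have hpiece : ∀ j : ℕ, ∫ t in Set.Ico ((j:ℝ)*h) (((j:ℝ)+1)*h), g t * rademacher n t = 0 := by
    intro j
    have hjh : (j:ℝ)*h = (j:ℝ)/2^d := by rw [hhdef, div_eq_mul_inv]
    have hjh1 : ((j:ℝ)+1)*h = ((j:ℝ)+1)/2^d := by rw [hhdef, div_eq_mul_inv]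
    have heh : e ≤ h := by rw [h2e]; linarith
    have hub : (j:ℝ)*h + e ≤ ((j:ℝ)+1)*h := by nlinarith
    have hgc : ∀ x ∈ Set.Ico ((j:ℝ)*h) (((j:ℝ)+1)*h), g x = g ((j:ℝ)*h) := by
      intro x hx
      rw [hjh] at hx ⊢
      rw [hjh1] at hx
      exact hg j x hx
    have hsplit : Set.Ico ((j:ℝ)*h) (((j:ℝ)+1)*h) =
        Set.Ico ((j:ℝ)*h) ((j:ℝ)*h+e) ∪ Set.Ico ((j:ℝ)*h+e) (((j:ℝ)+1)*h) :=
      (Set.Ico_union_Ico_eq_Ico (by linarith) hub).symm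
    have hI1 : ∫ t in Set.Ico ((j:ℝ)*h) ((j:ℝ)*h+e), g t * rademacher n t
        = e * g ((j:ℝ)*h) := by
      rw [setIntegral_congr_fun measurableSet_Ico
        (g := fun _ => g ((j:ℝ)*h)) (fun x hx => by
          rw [hval j x hx, hgc x ⟨hx.1, lt_of_lt_of_le hx.2 hub⟩, mul_one]),
        integral_const_Ico _ _ _ (by linarith)]
      ring
    have hI2 : ∫ t in Set.Ico ((j:ℝ)*h+e) (((j:ℝ)+1)*h), g t * rademacher n t
        = -(e * g ((j:ℝ)*h)) := by
      rw [setIntegral_congr_fun measurableSet_Ico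
        (g := fun _ => -g ((j:ℝ)*h)) (fun x hx => by
          rw [hval2 j x hx, hgc x ⟨le_trans (by linarith) hx.1, hx.2⟩]
          ring),
        integral_const_Ico _ _ _ hub]
      have : ((j:ℝ)+1)*h - ((j:ℝ)*h + e) = e := by rw [h2e]; ring
      rw [this]
      ring
    rw [hsplit, setIntegral_union (Set.Ico_disjoint_Ico.mpr (min_le_of_left_le (le_max_right _ _)))
      measurableSet_Ico (hprod.integrableOn (by simp [Real.volume_Ico]))
      (hprod.integrableOn (by simp [Real.volume_Ico])), hI1, hI2]
    ring
  have hone : ((2^d : ℕ):ℝ) * h = 1 := by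
    push_cast
    rw [hhdef]
    field_simp
  calc ∫ t, g t * rademacher n t ∂lebI
      = ∫ t in Set.Ico (0:ℝ) 1, g t * rademacher n t := by rw [hrw]
    _ = ∫ t in Set.Ico (0:ℝ) (((2^d:ℕ):ℝ)*h), g t * rademacher n t := by rw [hone]
    _ = ∑ j ∈ Finset.range (2^d), ∫ t in Set.Ico ((j:ℝ)*h) (((j:ℝ)+1)*h), g t * rademacher n t :=
        integral_Ico_split _ hprod h (le_of_lt hhpos) _
    _ = 0 := Finset.sum_eq_zero fun j _ => hpiece j

-- PART 4 : Khintchine inequality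

lemma integral_const_lebI (c : ℝ) : ∫ _, c ∂lebI = c := by
  rw [MeasureTheory.integral_const]
  simp

lemma rademacher_pow_even (k : ℕ) (t : ℝ) {e : ℕ} (he : Even e) : rademacher k t ^ e = 1 := by
  obtain ⟨s, rfl⟩ := he
  rcases rademacher_pm k t with h | h <;> rw [h]
  · simp
  · exact Even.neg_one_pow ⟨s, rfl⟩

lemma rademacher_pow_odd (k : ℕ) (t : ℝ) {e : ℕ} (he : Odd e) :
    rademacher k t ^ e = rademacher k t := by
  obtain ⟨s, rfl⟩ := he
  rcases rademacher_pm k t with h | h <;> rw [h]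
  · simp
  · rw [Odd.neg_one_pow ⟨s, rfl⟩]

lemma sum_even_ite (f : ℕ → ℝ) (l : ℕ) :
    ∑ k ∈ Finset.range (2*l+1), (if Even k then f k else 0) =
      ∑ j ∈ Finset.range (l+1), f (2*j) := by
  induction l with
  | zero => simp
  | succ l ih =>
    have h1 : 2*(l+1)+1 = (2*l+1) + 1 + 1 := by ring
    rw [h1, Finset.sum_range_succ, Finset.sum_range_succ, ih]
    have h2 : ¬ Even (2*l+1) := by simp [Nat.even_add_one, Nat.even_mul]
    have h3 : Even (2*l+1+1) := by refine ⟨l+1, by ring⟩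
    rw [if_neg h2, if_pos h3]
    have h4 : 2*l+1+1 = 2*(l+1) := by ring
    rw [add_zero, h4]
    exact (Finset.sum_range_succ (fun j => f (2*j)) (l+1)).symm

lemma choose_le_four_pow (l i : ℕ) : ((2*l).choose i : ℝ) ≤ 4^l := by
  by_cases hi : i ≤ 2*l
  · have h1 : (2*l).choose i ≤ 2^(2*l) := by
      calc (2*l).choose i ≤ ∑ k ∈ Finset.range (2*l+1), (2*l).choose k :=
            Finset.single_le_sum (f := fun k => (2*l).choose k) (fun k _ => Nat.zero_le _)
              (Finset.mem_range.mpr (by omega))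
        _ = 2^(2*l) := Nat.sum_range_choose (2*l)
    calc ((2*l).choose i : ℝ) ≤ ((2:ℝ))^(2*l) := by exact_mod_cast h1
      _ = 4^l := by rw [pow_mul]; norm_num
  · rw [Nat.choose_eq_zero_of_lt (by omega)]
    norm_num

lemma khintchine_gen {ι : Type*} [DecidableEq ι] (m : ℕ) :
    ∀ (c : ℕ) (P : Finset ι), P.card = c → ∀ (idx : ι → ℕ) (β : ι → ℝ),
    Set.InjOn idx P → (∀ q ∈ P, 1 ≤ idx q) → ∀ l, l ≤ m →
    ∫ u, (∑ q ∈ P, β q * rademacher (idx q) u) ^ (2*l) ∂lebI ≤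
      ((4:ℝ)^m)^l * (∑ q ∈ P, (β q)^2)^l := by
  intro c
  induction c with
  | zero =>
    intro P hP idx β _ _ l _
    rw [Finset.card_eq_zero.mp hP]
    simp only [Finset.sum_empty]
    cases l with
    | zero => simpa using le_of_eq (integral_const_lebI 1)
    | succ l =>
      have h0 : (2*(l+1)) ≠ 0 := by omega
      have h0' : (l+1) ≠ 0 := by omega
      simp [zero_pow h0, zero_pow h0']
  | succ c IH =>
    intro P hP idx β hinj h1 l hlm
    obtain ⟨q0, hq0, hmax⟩ := Finset.exists_max_image P idx
      (Finset.card_pos.mp (by omega))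
    set P' := P.erase q0 with hP'
    set g : ℝ → ℝ := fun u => ∑ q ∈ P', β q * rademacher (idx q) u with hgdef
    set b := β q0 with hbdef
    set d0 := idx q0 with hd0def
    have hcard' : P'.card = c := by
      rw [hP', Finset.card_erase_of_mem hq0, hP]
      omega
    have hinj' : Set.InjOn idx P' := hinj.mono (Set.Subset.trans
      (Finset.coe_subset.mpr (Finset.erase_subset _ _)) (le_refl _))
    have h1' : ∀ q ∈ P', 1 ≤ idx q := fun q hq => h1 q (Finset.mem_of_mem_erase hq)
    have hgbdd : Bdd g :=
      Bdd.sum _ _ (fun q _ => (Bdd.const (β q)).mul (rademacher_bdd _))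
    have hsum : ∀ u, ∑ q ∈ P, β q * rademacher (idx q) u = g u + b * rademacher d0 u := by
      intro u
      rw [← Finset.sum_erase_add P _ hq0]
    have hσ : ∑ q ∈ P, (β q)^2 = (∑ q ∈ P', (β q)^2) + b^2 := by
      rw [← Finset.sum_erase_add P _ hq0]
    have hKpos : (0:ℝ) < 4^m := by positivity
    have hK1 : (1:ℝ) ≤ 4^m := one_le_pow₀ (by norm_num)
    have hKl : ∀ s : ℕ, (1:ℝ) ≤ ((4:ℝ)^m)^s := fun s => one_le_pow₀ hK1
    by_cases hd2 : 2 ≤ d0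
    case neg =>
      -- d0 = 1, P = {q0}
      have hd1 : d0 = 1 := by
        have := h1 q0 hq0
        omega
      have hsing : P = {q0} := by
        apply Finset.eq_singleton_iff_unique_mem.mpr
        refine ⟨hq0, fun x hx => ?_⟩
        have hx1 : 1 ≤ idx x := h1 x hx
        have hx2 : idx x ≤ d0 := hmax x hx
        exact hinj (Finset.mem_coe.mpr hx) (Finset.mem_coe.mpr hq0) (by omega)
      rw [hsing]
      simp only [Finset.sum_singleton]
      rw [show (fun u => (β q0 * rademacher (idx q0) u)^(2*l)) = fun _ => (β q0)^(2*l) by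
        funext u
        rw [mul_pow, rademacher_pow_even _ _ ⟨l, by ring⟩, mul_one]]
      rw [integral_const_lebI]
      rw [pow_mul]
      exact le_mul_of_one_le_left (by positivity) (hKl l)
    case pos =>
      have hgdy : DyConst (d0 - 2) g := by
        apply DyConst.sum
        intro q hq
        have hqP : q ∈ P := Finset.mem_of_mem_erase hq
        have hle : idx q ≤ d0 := hmax q hqP
        have hne : idx q ≠ d0 := fun he =>
          (Finset.ne_of_mem_erase hq) (hinj (Finset.mem_coe.mpr hqP) (Finset.mem_coe.mpr hq0) he)
        have h1q : 1 ≤ idx q := h1 q hqP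
        exact DyConst.mono (by omega) ((DyConst.const _ (β q)).mul (rademacher_dyconst (idx q)))
      have hrw2 : (fun u => (∑ q ∈ P, β q * rademacher (idx q) u)^(2*l))
          = fun u => ∑ k ∈ Finset.range (2*l+1),
              (g u)^k * (b * rademacher d0 u)^(2*l-k) * (((2*l).choose k : ℕ) : ℝ) := by
        funext u
        rw [hsum u, add_pow]
      have hint : ∀ k ∈ Finset.range (2*l+1), Integrable
          (fun u => (g u)^k * (b * rademacher d0 u)^(2*l-k) * (((2*l).choose k : ℕ):ℝ)) lebI :=
        fun k _ => (((hgbdd.pow k).mul (((Bdd.const b).mul (rademacher_bdd d0)).pow (2*l-k))).mul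
          (Bdd.const _)).integrable
      rw [hrw2, integral_finset_sum _ hint]
      have hterm : ∀ k ∈ Finset.range (2*l+1),
          ∫ u, (g u)^k * (b * rademacher d0 u)^(2*l-k) * (((2*l).choose k:ℕ):ℝ) ∂lebI
          = if Even k then (((2*l).choose k:ℕ):ℝ) * b^(2*l-k) * ∫ u, (g u)^k ∂lebI else 0 := by
        intro k hk
        have hk2 : k ≤ 2*l := by have := Finset.mem_range.mp hk; omega
        by_cases he : Even k
        · rw [if_pos he]
          have heven : Even (2*l - k) := by
            obtain ⟨s, rfl⟩ := he
            exact ⟨l - s, by omega⟩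
          rw [show (fun u => (g u)^k * (b * rademacher d0 u)^(2*l-k) * (((2*l).choose k:ℕ):ℝ))
              = fun u => (((2*l).choose k:ℕ):ℝ) * b^(2*l-k) * (g u)^k from funext fun u => by
            rw [mul_pow, rademacher_pow_even _ _ heven]; ring]
          rw [integral_const_mul]
        · rw [if_neg he]
          have hodd : Odd (2*l - k) := by
            obtain ⟨s, hs⟩ := Nat.not_even_iff_odd.mp he
            exact ⟨l - s - 1, by omega⟩
          rw [show (fun u => (g u)^k * (b * rademacher d0 u)^(2*l-k) * (((2*l).choose k:ℕ):ℝ))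
              = fun u => (((2*l).choose k:ℕ):ℝ) * b^(2*l-k) * (g u)^k * rademacher d0 u from
              funext fun u => by rw [mul_pow, rademacher_pow_odd _ _ hodd]; ring]
          exact radZ hd2 ((DyConst.const _ _).mul (hgdy.comp (· ^ k)))
            ((Bdd.const _).mul (hgbdd.pow k))
      calc ∑ k ∈ Finset.range (2*l+1),
            ∫ u, (g u)^k * (b * rademacher d0 u)^(2*l-k) * (((2*l).choose k:ℕ):ℝ) ∂lebI
          = ∑ k ∈ Finset.range (2*l+1), (if Even k then
              (((2*l).choose k:ℕ):ℝ) * b^(2*l-k) * ∫ u, (g u)^k ∂lebI else 0) :=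
            Finset.sum_congr rfl hterm
        _ = ∑ j ∈ Finset.range (l+1),
              (((2*l).choose (2*j):ℕ):ℝ) * b^(2*l-2*j) * ∫ u, (g u)^(2*j) ∂lebI :=
            sum_even_ite _ l
        _ ≤ ∑ j ∈ Finset.range (l+1), ((4:ℝ)^m)^l *
              ((∑ q ∈ P', β q^2)^j * (b^2)^(l-j) * ((l.choose j:ℕ):ℝ)) := by
            apply Finset.sum_le_sum
            intro j hj
            have hjl : j ≤ l := by have := Finset.mem_range.mp hj; omega
            have hIH : ∫ u, (g u)^(2*j) ∂lebI ≤ ((4:ℝ)^m)^j * (∑ q ∈ P', β q^2)^j :=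
              IH P' hcard' idx β hinj' h1' j (le_trans hjl hlm)
            have hb2 : b^(2*l-2*j) = (b^2)^(l-j) := by
              rw [← pow_mul]
              congr 1
              omega
            have hkey : (((2*l).choose (2*j):ℕ):ℝ) * ((4:ℝ)^m)^j
                ≤ ((4:ℝ)^m)^l * ((l.choose j:ℕ):ℝ) := by
              rcases eq_or_lt_of_le hjl with rfl | hjl'
              · simp [Nat.choose_self]
              · have hc4 : (((2*l).choose (2*j):ℕ):ℝ) ≤ 4^l := choose_le_four_pow l (2*j)
                have h2c : ((4:ℝ))^l ≤ ((4:ℝ)^m)^(l-j) := by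
                  rw [← pow_mul]
                  apply pow_le_pow_right₀ (by norm_num)
                  calc l ≤ m := hlm
                    _ ≤ m * (l-j) := Nat.le_mul_of_pos_right m (by omega)
                have h3 : (1:ℝ) ≤ ((l.choose j:ℕ):ℝ) := by
                  exact_mod_cast Nat.succ_le_of_lt (Nat.choose_pos hjl)
                have hKj : (0:ℝ) ≤ ((4:ℝ)^m)^j := by positivity
                calc (((2*l).choose (2*j):ℕ):ℝ) * ((4:ℝ)^m)^j ≤ 4^l * ((4:ℝ)^m)^j :=
                      mul_le_mul_of_nonneg_right hc4 hKj
                  _ ≤ ((4:ℝ)^m)^(l-j) * ((4:ℝ)^m)^j := mul_le_mul_of_nonneg_right h2c hKj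
                  _ = ((4:ℝ)^m)^l := by rw [← pow_add]; congr 1; omega
                  _ ≤ ((4:ℝ)^m)^l * ((l.choose j:ℕ):ℝ) :=
                      le_mul_of_one_le_right (by positivity) h3
            have hnn : (0:ℝ) ≤ (((2*l).choose (2*j):ℕ):ℝ) * (b^2)^(l-j) := by positivity
            calc (((2*l).choose (2*j):ℕ):ℝ) * b^(2*l-2*j) * ∫ u, (g u)^(2*j) ∂lebI
                ≤ (((2*l).choose (2*j):ℕ):ℝ) * (b^2)^(l-j) *
                    (((4:ℝ)^m)^j * (∑ q ∈ P', β q^2)^j) := by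
                  rw [hb2]
                  exact mul_le_mul_of_nonneg_left hIH hnn
              _ = ((((2*l).choose (2*j):ℕ):ℝ) * ((4:ℝ)^m)^j) *
                    ((b^2)^(l-j) * (∑ q ∈ P', β q^2)^j) := by ring
              _ ≤ (((4:ℝ)^m)^l * ((l.choose j:ℕ):ℝ)) *
                    ((b^2)^(l-j) * (∑ q ∈ P', β q^2)^j) :=
                  mul_le_mul_of_nonneg_right hkey (by positivity)
              _ = ((4:ℝ)^m)^l * ((∑ q ∈ P', β q^2)^j * (b^2)^(l-j) * ((l.choose j:ℕ):ℝ)) := by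
                  ring
        _ = ((4:ℝ)^m)^l * ((∑ q ∈ P', β q^2) + b^2)^l := by
            rw [← Finset.mul_sum, ← add_pow]
        _ = ((4:ℝ)^m)^l * (∑ q ∈ P, β q^2)^l := by rw [← hσ]

-- PART 5 : exact L² identity, Cauchy-Schwarz, chaos moments

lemma L2_exact (D : Finset ℕ) (hD : ∀ d ∈ D, 1 ≤ d) (β : ℕ → ℝ) :
    ∫ u, (∑ d ∈ D, β d * rademacher d u)^2 ∂lebI = ∑ d ∈ D, (β d)^2 := by
  classical
  have hrw : (fun u => (∑ d ∈ D, β d * rademacher d u)^2)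
      = fun u => ∑ d ∈ D, ∑ e ∈ D, (β d * rademacher d u) * (β e * rademacher e u) := by
    funext u
    rw [sq, Finset.sum_mul_sum]
  have hbddde : ∀ d e : ℕ, Bdd (fun u => (β d * rademacher d u) * (β e * rademacher e u)) :=
    fun d e => ((Bdd.const _).mul (rademacher_bdd d)).mul ((Bdd.const _).mul (rademacher_bdd e))
  rw [hrw, integral_finset_sum _ (fun d _ => Bdd.integrable (Bdd.sum _ _ fun e _ => hbddde d e))]
  have hcross : ∀ d e : ℕ, 1 ≤ d → 1 ≤ e → d ≠ e →
      ∫ u, (β d * rademacher d u) * (β e * rademacher e u) ∂lebI = 0 := by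
    intro d e hd he hne
    rcases lt_or_gt_of_ne hne with hlt | hlt
    · rw [show (fun u => (β d * rademacher d u) * (β e * rademacher e u))
          = fun u => (β d * β e) * rademacher d u * rademacher e u from funext fun u => by ring]
      exact radZ (by omega)
        (DyConst.mono (show d - 1 ≤ e - 2 by omega)
          ((DyConst.const _ _).mul (rademacher_dyconst d)))
        ((Bdd.const _).mul (rademacher_bdd d))
    · rw [show (fun u => (β d * rademacher d u) * (β e * rademacher e u))
          = fun u => (β d * β e) * rademacher e u * rademacher d u from funext fun u => by ring]
      exact radZ (by omega)
        (DyConst.mono (show e - 1 ≤ d - 2 by omega)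
          ((DyConst.const _ _).mul (rademacher_dyconst e)))
        ((Bdd.const _).mul (rademacher_bdd e))
  apply Finset.sum_congr rfl
  intro d hd
  rw [integral_finset_sum _ (fun e _ => (hbddde d e).integrable)]
  rw [Finset.sum_eq_single_of_mem d hd (fun e he hne =>
    hcross d e (hD d hd) (hD e he) (Ne.symm hne))]
  rw [show (fun u => (β d * rademacher d u) * (β d * rademacher d u))
      = fun _ => (β d)^2 from funext fun u => by
    have := rademacher_sq d u
    nlinarith [this]]
  exact integral_const_lebI _

lemma cs {u v : ℝ → ℝ} (hu : Bdd u) (hv : Bdd v) :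
    ∫ t, u t * v t ∂lebI ≤ Real.sqrt (∫ t, u t^2 ∂lebI) * Real.sqrt (∫ t, v t^2 ∂lebI) := by
  set A := ∫ t, u t^2 ∂lebI with hA
  set B := ∫ t, v t^2 ∂lebI with hB
  set Cc := ∫ t, u t * v t ∂lebI with hC
  have hA0 : 0 ≤ A := integral_nonneg (fun t => sq_nonneg _)
  have hB0 : 0 ≤ B := integral_nonneg (fun t => sq_nonneg _)
  have key : ∀ x y : ℝ, 0 ≤ x^2*A - 2*(x*y)*Cc + y^2*B := by
    intro x y
    have h0 : 0 ≤ ∫ t, (x * u t - y * v t)^2 ∂lebI := integral_nonneg (fun t => sq_nonneg _)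
    have hexp : ∫ t, (x * u t - y * v t)^2 ∂lebI = x^2*A - 2*(x*y)*Cc + y^2*B := by
      have hrw : (fun t => (x * u t - y * v t)^2)
          = fun t => x^2 * (u t^2) + ((-(2*(x*y))) * (u t * v t) + y^2 * (v t^2)) := by
        funext t
        ring
      rw [hrw, integral_add ((Bdd.const _).mul (hu.pow 2)).integrable
          (((Bdd.const _).mul (hu.mul hv)).add ((Bdd.const _).mul (hv.pow 2))).integrable,
        integral_add ((Bdd.const _).mul (hu.mul hv)).integrable
          ((Bdd.const _).mul (hv.pow 2)).integrable,
        integral_const_mul, integral_const_mul, integral_const_mul]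
      ring
    linarith [hexp ▸ h0]
  by_cases hAz : A = 0
  · have hCc : Cc ≤ 0 := by
      by_contra hpos
      push_neg at hpos
      have k1 := key ((B+1)/(2*Cc)) 1
      rw [hAz] at k1
      have k2 : ((B+1)/(2*Cc))*1*Cc = (B+1)/2 := by
        field_simp
      nlinarith [k1, k2]
    calc Cc ≤ 0 := hCc
      _ ≤ _ := by positivity
  by_cases hBz : B = 0
  · have hCc : Cc ≤ 0 := by
      by_contra hpos
      push_neg at hpos
      have k1 := key 1 ((A+1)/(2*Cc))
      rw [hBz] at k1
      have k2 : 1*((A+1)/(2*Cc))*Cc = (A+1)/2 := by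
        field_simp
      nlinarith [k1, k2]
    calc Cc ≤ 0 := hCc
      _ ≤ _ := by positivity
  · have hApos : 0 < A := lt_of_le_of_ne hA0 (Ne.symm hAz)
    have hBpos : 0 < B := lt_of_le_of_ne hB0 (Ne.symm hBz)
    have k3 := key (Real.sqrt B) (Real.sqrt A)
    rw [Real.sq_sqrt hB0, Real.sq_sqrt hA0] at k3
    have hsq : 0 < Real.sqrt A * Real.sqrt B := by
      apply _root_.mul_pos <;> exact Real.sqrt_pos.mpr (by assumption)
    have hprodA : Real.sqrt A * Real.sqrt A = A := Real.mul_self_sqrt hA0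
    have hprodB : Real.sqrt B * Real.sqrt B = B := Real.mul_self_sqrt hB0
    have h4 : (Real.sqrt A * Real.sqrt B) * Cc
        ≤ (Real.sqrt A * Real.sqrt B) * (Real.sqrt A * Real.sqrt B) := by
      nlinarith [k3, hprodA, hprodB]
    exact le_of_mul_le_mul_left h4 hsq

/-- the row functions of the chaos -/
noncomputable def gfun (a : ℕ → ℕ → ℝ) (j : ℕ) (t : ℝ) : ℝ :=
  ∑ i ∈ Finset.Ico 1 j, a i j * rademacher i t

/-- the partial chaos sums -/
noncomputable def Ffun (a : ℕ → ℕ → ℝ) (N : ℕ) (t : ℝ) : ℝ :=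
  ∑ j ∈ Finset.Icc 1 N, rademacher j t * gfun a j t

/-- the squared ℓ² norm of the coefficients -/
noncomputable def Sig (a : ℕ → ℕ → ℝ) (N : ℕ) : ℝ :=
  ∑ j ∈ Finset.Icc 1 N, ∑ i ∈ Finset.Ico 1 j, (a i j)^2

lemma gfun_bdd (a : ℕ → ℕ → ℝ) (j : ℕ) : Bdd (gfun a j) :=
  Bdd.sum _ _ fun i _ => (Bdd.const _).mul (rademacher_bdd i)

lemma Ffun_bdd (a : ℕ → ℕ → ℝ) (N : ℕ) : Bdd (Ffun a N) :=
  Bdd.sum _ _ fun j _ => (rademacher_bdd j).mul (gfun_bdd a j)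

lemma Sig_nonneg (a : ℕ → ℕ → ℝ) (N : ℕ) : 0 ≤ Sig a N :=
  Finset.sum_nonneg fun j _ => Finset.sum_nonneg fun i _ => sq_nonneg _

lemma gfun_dy (a : ℕ → ℕ → ℝ) (j : ℕ) : DyConst (j-2) (gfun a j) := by
  apply DyConst.sum
  intro i hi
  have hi' := Finset.mem_Ico.mp hi
  exact DyConst.mono (show i - 1 ≤ j - 2 by omega)
    ((DyConst.const _ _).mul (rademacher_dyconst i))

lemma Ffun_dy (a : ℕ → ℕ → ℝ) (N : ℕ) : DyConst (N-1) (Ffun a N) := by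
  apply DyConst.sum
  intro j hj
  have hj' := Finset.mem_Icc.mp hj
  exact DyConst.mono (show max (j-1) (j-2) ≤ N-1 by omega)
    ((DyConst.mono (le_max_left _ _) (rademacher_dyconst j)).mul
      (DyConst.mono (le_max_right _ _) (gfun_dy a j)))

lemma Sig_succ (a : ℕ → ℕ → ℝ) (N : ℕ) :
    Sig a (N+1) = Sig a N + ∑ i ∈ Finset.Ico 1 (N+1), (a i (N+1))^2 :=
  Finset.sum_Icc_succ_top (by omega) _

lemma Ffun_succ (a : ℕ → ℕ → ℝ) (N : ℕ) (t : ℝ) :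
    Ffun a (N+1) t = Ffun a N t + rademacher (N+1) t * gfun a (N+1) t :=
  Finset.sum_Icc_succ_top (by omega) _

lemma Ffun_one (a : ℕ → ℕ → ℝ) (t : ℝ) : Ffun a 1 t = 0 := by
  unfold Ffun gfun
  simp

lemma Ffun_L2 (a : ℕ → ℕ → ℝ) : ∀ N, ∫ t, (Ffun a N t)^2 ∂lebI = Sig a N := by
  intro N
  induction N with
  | zero =>
    unfold Ffun Sig
    simp
  | succ N IH =>
    rcases Nat.eq_zero_or_pos N with rfl | hN
    · rw [show (fun t => (Ffun a 1 t)^2) = fun _ => (0:ℝ) from funext fun t => by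
        rw [Ffun_one]; ring]
      unfold Sig
      simp
    · have hpt : ∀ t, (Ffun a (N+1) t)^2 = ((Ffun a N t)^2 + (gfun a (N+1) t)^2)
          + (2 * Ffun a N t * gfun a (N+1) t) * rademacher (N+1) t := by
        intro t
        rw [Ffun_succ]
        rcases rademacher_pm (N+1) t with h | h <;> rw [h] <;> ring
      rw [show (fun t => (Ffun a (N+1) t)^2) = fun t => ((Ffun a N t)^2 + (gfun a (N+1) t)^2)
          + (2 * Ffun a N t * gfun a (N+1) t) * rademacher (N+1) t from funext hpt]
      rw [integral_add (((Ffun_bdd a N).pow 2).add ((gfun_bdd a (N+1)).pow 2)).integrable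
        ((((Bdd.const 2).mul (Ffun_bdd a N)).mul (gfun_bdd a (N+1))).mul
          (rademacher_bdd (N+1))).integrable]
      rw [integral_add ((Ffun_bdd a N).pow 2).integrable ((gfun_bdd a (N+1)).pow 2).integrable]
      rw [IH]
      have hz : ∫ t, (2 * Ffun a N t * gfun a (N+1) t) * rademacher (N+1) t ∂lebI = 0 := by
        apply radZ (by omega)
        · exact ((DyConst.const _ 2).mul (Ffun_dy a N)).mul
            (show DyConst (N+1-2) (gfun a (N+1)) from by
              have := gfun_dy a (N+1)
              simpa using this)
        · exact ((Bdd.const 2).mul (Ffun_bdd a N)).mul (gfun_bdd a (N+1))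
      rw [hz, add_zero]
      have hg2 : ∫ t, (gfun a (N+1) t)^2 ∂lebI = ∑ i ∈ Finset.Ico 1 (N+1), (a i (N+1))^2 := by
        exact L2_exact (Finset.Ico 1 (N+1)) (fun d hd => (Finset.mem_Ico.mp hd).1)
          (fun i => a i (N+1))
      rw [hg2, Sig_succ]

lemma Ffun_L4 (a : ℕ → ℕ → ℝ) : ∀ N, Real.sqrt (∫ t, (Ffun a N t)^4 ∂lebI) ≤ 48 * Sig a N := by
  intro N
  induction N with
  | zero =>
    unfold Ffun Sig
    simp
  | succ N IH =>
    rcases Nat.eq_zero_or_pos N with rfl | hN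
    · rw [show (fun t => (Ffun a 1 t)^4) = fun _ => (0:ℝ) from funext fun t => by
        rw [Ffun_one]; ring]
      have hgoal : (0:ℝ) ≤ 48 * Sig a 1 := mul_nonneg (by norm_num) (Sig_nonneg a 1)
      simpa using hgoal
    · set F := Ffun a N with hF
      set G := gfun a (N+1) with hG
      have hpt : ∀ t, (Ffun a (N+1) t)^4 = ((F t)^4 + (6 * ((F t)^2 * (G t)^2) + (G t)^4))
          + (4 * (F t)^3 * G t + 4 * F t * (G t)^3) * rademacher (N+1) t := by
        intro t
        rw [Ffun_succ]
        rcases rademacher_pm (N+1) t with h | h <;> rw [h] <;> ring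
      have hFb := Ffun_bdd a N
      have hGb := gfun_bdd a (N+1)
      have hint1 : Integrable (fun t => (F t)^4) lebI := (hFb.pow 4).integrable
      have hint2 : Integrable (fun t => (F t)^2 * (G t)^2) lebI :=
        ((hFb.pow 2).mul (hGb.pow 2)).integrable
      have hint3 : Integrable (fun t => (G t)^4) lebI := (hGb.pow 4).integrable
      have hz : ∫ t, (4 * (F t)^3 * G t + 4 * F t * (G t)^3) * rademacher (N+1) t ∂lebI = 0 := by
        apply radZ (by omega)
        · apply DyConst.add
          · exact ((DyConst.const _ 4).mul ((Ffun_dy a N).comp (·^3))).mul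
              (show DyConst (N+1-2) G from by simpa using gfun_dy a (N+1))
          · exact ((DyConst.const _ 4).mul (Ffun_dy a N)).mul
              ((show DyConst (N+1-2) G from by simpa using gfun_dy a (N+1)).comp (·^3))
        · exact (((Bdd.const 4).mul (hFb.pow 3)).mul hGb).add
            (((Bdd.const 4).mul hFb).mul (hGb.pow 3))
      have hsum : ∫ t, (Ffun a (N+1) t)^4 ∂lebI
          = (∫ t, (F t)^4 ∂lebI) + (6 * (∫ t, (F t)^2 * (G t)^2 ∂lebI) + ∫ t, (G t)^4 ∂lebI) := by
        rw [show (fun t => (Ffun a (N+1) t)^4) = fun t =>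
            ((F t)^4 + (6 * ((F t)^2 * (G t)^2) + (G t)^4))
            + (4 * (F t)^3 * G t + 4 * F t * (G t)^3) * rademacher (N+1) t from funext hpt]
        rw [integral_add
          ((hFb.pow 4).add (((Bdd.const 6).mul ((hFb.pow 2).mul (hGb.pow 2))).add
            (hGb.pow 4))).integrable
          (((((Bdd.const 4).mul (hFb.pow 3)).mul hGb).add
            (((Bdd.const 4).mul hFb).mul (hGb.pow 3))).mul (rademacher_bdd (N+1))).integrable]
        rw [hz, add_zero]
        rw [integral_add (hFb.pow 4).integrable
          (((Bdd.const 6).mul ((hFb.pow 2).mul (hGb.pow 2))).add (hGb.pow 4)).integrable]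
        rw [integral_add ((Bdd.const 6).mul ((hFb.pow 2).mul (hGb.pow 2))).integrable
          (hGb.pow 4).integrable]
        rw [integral_const_mul]
      set x := Real.sqrt (∫ t, (F t)^4 ∂lebI) with hx
      set y := Real.sqrt (∫ t, (G t)^4 ∂lebI) with hy
      have hF4nn : 0 ≤ ∫ t, (F t)^4 ∂lebI := by
        apply integral_nonneg
        intro t
        positivity
      have hG4nn : 0 ≤ ∫ t, (G t)^4 ∂lebI := by
        apply integral_nonneg
        intro t
        positivity
      have hx2 : x^2 = ∫ t, (F t)^4 ∂lebI := Real.sq_sqrt hF4nn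
      have hy2 : y^2 = ∫ t, (G t)^4 ∂lebI := Real.sq_sqrt hG4nn
      have hxnn : 0 ≤ x := Real.sqrt_nonneg _
      have hynn : 0 ≤ y := Real.sqrt_nonneg _
      have hcs : ∫ t, (F t)^2 * (G t)^2 ∂lebI ≤ x * y := by
        have h := cs (hFb.pow 2) (hGb.pow 2)
        rw [show (fun t => ((F t)^2)^2) = fun t => (F t)^4 from funext fun t => by ring,
            show (fun t => ((G t)^2)^2) = fun t => (G t)^4 from funext fun t => by ring] at h
        exact h
      have hbound : ∫ t, (Ffun a (N+1) t)^4 ∂lebI ≤ (x + 3*y)^2 := by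
        rw [hsum]
        nlinarith [hcs, hx2, hy2, hxnn, hynn]
      have hs1 : Real.sqrt (∫ t, (Ffun a (N+1) t)^4 ∂lebI) ≤ x + 3*y := by
        calc Real.sqrt (∫ t, (Ffun a (N+1) t)^4 ∂lebI) ≤ Real.sqrt ((x+3*y)^2) :=
              Real.sqrt_le_sqrt hbound
          _ = x + 3*y := Real.sqrt_sq (by linarith)
      set σ2 := ∑ i ∈ Finset.Ico 1 (N+1), (a i (N+1))^2 with hσ2
      have hσ2nn : 0 ≤ σ2 := Finset.sum_nonneg fun i _ => sq_nonneg _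
      have hg4 : ∫ t, (G t)^4 ∂lebI ≤ ((4:ℝ)^2)^2 * σ2^2 := by
        have h := khintchine_gen (ι := ℕ) 2 (Finset.Ico 1 (N+1)).card (Finset.Ico 1 (N+1)) rfl
          id (fun i => a i (N+1)) (Set.injOn_id _) (fun q hq => (Finset.mem_Ico.mp hq).1)
          2 (le_refl 2)
        exact h
      have hy16 : y ≤ 16 * σ2 := by
        calc y ≤ Real.sqrt (((4:ℝ)^2)^2 * σ2^2) := Real.sqrt_le_sqrt hg4
          _ = 16 * σ2 := by
            rw [show ((4:ℝ)^2)^2 * σ2^2 = (16*σ2)^2 from by ring,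
              Real.sqrt_sq (by positivity)]
      calc Real.sqrt (∫ t, (Ffun a (N+1) t)^4 ∂lebI) ≤ x + 3*y := hs1
        _ ≤ 48 * Sig a N + 3*(16*σ2) := add_le_add IH (by linarith)
        _ = 48 * Sig a (N+1) := by rw [Sig_succ]; ring

lemma Ffun_L1 (a : ℕ → ℕ → ℝ) (n : ℕ) :
    Real.sqrt (Sig a n) ≤ 48 * ∫ t, |Ffun a n t| ∂lebI := by
  set f := Ffun a n with hf
  have hfb := Ffun_bdd a n
  set A := ∫ t, |f t| ∂lebI with hA
  set B := ∫ t, |f t|^3 ∂lebI with hB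
  have hAnn : 0 ≤ A := integral_nonneg fun t => abs_nonneg _
  have hBnn : 0 ≤ B := by
    rw [hB]
    apply integral_nonneg
    intro t
    positivity
  have hSeq : ∫ t, (f t)^2 ∂lebI = Sig a n := Ffun_L2 a n
  have hSnn := Sig_nonneg a n
  have h1 : Sig a n ≤ Real.sqrt A * Real.sqrt B := by
    have h := cs (u := fun t => Real.sqrt |f t|) (v := fun t => |f t| * Real.sqrt |f t|)
      hfb.sqrt_abs (hfb.abs.mul hfb.sqrt_abs)
    rw [show (fun t => Real.sqrt |f t| * (|f t| * Real.sqrt |f t|)) = fun t => (f t)^2 from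
        funext fun t => by
          rw [show Real.sqrt |f t| * (|f t| * Real.sqrt |f t|)
              = (Real.sqrt |f t| * Real.sqrt |f t|) * |f t| from by ring,
            Real.mul_self_sqrt (abs_nonneg _), abs_mul_abs_self, ← sq]] at h
    rw [show (fun t => (Real.sqrt |f t|)^2) = fun t => |f t| from
        funext fun t => Real.sq_sqrt (abs_nonneg _)] at h
    rw [show (fun t => (|f t| * Real.sqrt |f t|)^2) = fun t => |f t|^3 from
        funext fun t => by
          rw [mul_pow, Real.sq_sqrt (abs_nonneg _)]
          ring] at h
    rw [hSeq] at h
    exact h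
  have h2 : B ≤ Real.sqrt (Sig a n) * Real.sqrt (∫ t, (f t)^4 ∂lebI) := by
    have h := cs (u := fun t => |f t|) (v := fun t => (f t)^2) hfb.abs (hfb.pow 2)
    rw [show (fun t => |f t| * (f t)^2) = fun t => |f t|^3 from
        funext fun t => by
          rw [← sq_abs (f t)]
          ring] at h
    rw [show (fun t => (|f t|)^2) = fun t => (f t)^2 from
        funext fun t => sq_abs _] at h
    rw [show (fun t => ((f t)^2)^2) = fun t => (f t)^4 from funext fun t => by ring] at h
    rw [hSeq] at h
    exact h
  have h4 : Real.sqrt (∫ t, (f t)^4 ∂lebI) ≤ 48 * Sig a n := Ffun_L4 a n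
  set s := Real.sqrt (Sig a n) with hs
  have hsnn : 0 ≤ s := Real.sqrt_nonneg _
  have hs2 : s^2 = Sig a n := Real.sq_sqrt hSnn
  have h2' : B ≤ s * (48 * Sig a n) :=
    le_trans h2 (mul_le_mul_of_nonneg_left h4 hsnn)
  have h1sq : (Sig a n)^2 ≤ A * B := by
    nlinarith [h1, Real.mul_self_sqrt hAnn, Real.mul_self_sqrt hBnn,
      Real.sqrt_nonneg A, Real.sqrt_nonneg B, hSnn]
  have hfinal : s^4 ≤ 48 * A * s^3 := by
    have hAB : A * B ≤ A * (s * (48 * Sig a n)) := mul_le_mul_of_nonneg_left h2' hAnn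
    have hSig : Sig a n = s^2 := hs2.symm
    rw [hSig] at h1sq hAB
    nlinarith [h1sq, hAB]
  rcases eq_or_lt_of_le hsnn with hs0 | hs0
  · rw [← hs0]
    positivity
  · nlinarith [hfinal, hs0, pow_pos hs0 3]

-- PART 6 : pair indexing combinatorics

def pairsF (n : ℕ) : Finset (ℕ × ℕ) :=
  (Finset.Icc 1 n ×ˢ Finset.Icc 1 n).filter fun q => q.1 < q.2

lemma pair_sum (n : ℕ) (h : ℕ → ℕ → ℝ) :
    ∑ q ∈ pairsF n, h q.1 q.2 = ∑ i ∈ Finset.Icc 1 n, ∑ j ∈ Finset.Ioc i n, h i j := by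
  rw [pairsF, Finset.sum_filter, Finset.sum_product]
  simp only
  apply Finset.sum_congr rfl
  intro i hi
  rw [← Finset.sum_filter]
  apply Finset.sum_congr ?_ (fun _ _ => rfl)
  ext j
  simp only [Finset.mem_filter, Finset.mem_Icc, Finset.mem_Ioc]
  have hi' := Finset.mem_Icc.mp hi
  omega

lemma pair_sum' (n : ℕ) (h : ℕ → ℕ → ℝ) :
    ∑ q ∈ pairsF n, h q.1 q.2 = ∑ j ∈ Finset.Icc 1 n, ∑ i ∈ Finset.Ico 1 j, h i j := by
  rw [pairsF, Finset.sum_filter, Finset.sum_product_right]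
  simp only
  apply Finset.sum_congr rfl
  intro j hj
  rw [← Finset.sum_filter]
  apply Finset.sum_congr ?_ (fun _ _ => rfl)
  ext i
  simp only [Finset.mem_filter, Finset.mem_Icc, Finset.mem_Ico]
  have hj' := Finset.mem_Icc.mp hj
  omega

lemma Ffun_eq (a : ℕ → ℕ → ℝ) (n : ℕ) (t : ℝ) :
    ∑ i ∈ Finset.Icc 1 n, ∑ j ∈ Finset.Ioc i n,
      a i j * (rademacher i t * rademacher j t) = Ffun a n t := by
  rw [← pair_sum n (fun i j => a i j * (rademacher i t * rademacher j t))]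
  have h2 : Ffun a n t = ∑ j ∈ Finset.Icc 1 n, ∑ i ∈ Finset.Ico 1 j,
      a i j * (rademacher i t * rademacher j t) := by
    unfold Ffun gfun
    apply Finset.sum_congr rfl
    intro j hj
    rw [Finset.mul_sum]
    apply Finset.sum_congr rfl
    intro i hi
    ring
  rw [h2, ← pair_sum']

lemma Sig_eq (a : ℕ → ℕ → ℝ) (n : ℕ) :
    Sig a n = ∑ i ∈ Finset.Icc 1 n, ∑ j ∈ Finset.Ioc i n, (a i j)^2 := by
  unfold Sig
  rw [← pair_sum' n (fun i j => (a i j)^2), pair_sum n (fun i j => (a i j)^2)]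

/-- the triangular pair index -/
def idxP (q : ℕ × ℕ) : ℕ := (q.2 - 1) * (q.2 - 2) / 2 + q.1

lemma rho_eq_idxP (i j : ℕ) (u : ℝ) : rho i j u = rademacher (idxP (i, j)) u := rfl

lemma Tstep (j : ℕ) (hj : 2 ≤ j) : (j-1)*(j-2)/2 + (j-1) = j*(j-1)/2 := by
  obtain ⟨s, rfl⟩ : ∃ s, j = s+2 := ⟨j-2, by omega⟩
  obtain ⟨c, hc⟩ := Nat.even_mul_succ_self s
  have h1 : (s+2-1)*(s+2-2) = 2*c := by
    have : (s+2-1)*(s+2-2) = s*(s+1) := by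
      simp [Nat.mul_comm]
    omega
  have h2 : (s+2)*(s+2-1) = 2*(c+s+1) := by
    have he : (s+2)*(s+2-1) = s*(s+1) + 2*(s+1) := by
      simp
      ring
    omega
  rw [h1, h2]
  omega

lemma Tmono {j l : ℕ} (hjl : j ≤ l) : (j-1)*(j-2)/2 ≤ (l-1)*(l-2)/2 :=
  Nat.div_le_div_right (Nat.mul_le_mul (by omega) (by omega))

lemma idx_lt {i j k l : ℕ} (hi : 1 ≤ i) (hij : i < j) (hk : 1 ≤ k) (hjl : j < l) :
    idxP (i, j) < idxP (k, l) := by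
  unfold idxP
  simp only
  have h2j : 2 ≤ j := by omega
  have h1 : (j-1)*(j-2)/2 + i ≤ j*(j-1)/2 := by
    rw [← Tstep j h2j]
    omega
  have h2 : j*(j-1)/2 ≤ (l-1)*(l-2)/2 := by
    have h3 := Tmono (j := j+1) (l := l) (by omega)
    have h4 : (j+1-1) = j := by omega
    have h5 : (j+1-2) = j-1 := by omega
    rw [h4, h5] at h3
    exact h3
  omega

lemma idx_injOn (n : ℕ) : Set.InjOn idxP (pairsF n) := by
  intro q hq r hr heq
  have hq' := Finset.mem_filter.mp (Finset.mem_coe.mp hq)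
  have hr' := Finset.mem_filter.mp (Finset.mem_coe.mp hr)
  obtain ⟨i, j⟩ := q
  obtain ⟨k, l⟩ := r
  have hqm := Finset.mem_product.mp hq'.1
  have hrm := Finset.mem_product.mp hr'.1
  have hi : 1 ≤ i := (Finset.mem_Icc.mp hqm.1).1
  have hk : 1 ≤ k := (Finset.mem_Icc.mp hrm.1).1
  have hij : i < j := hq'.2
  have hkl : k < l := hr'.2
  rcases lt_trichotomy j l with h | h | h
  · exact absurd heq (Nat.ne_of_lt (idx_lt hi hij hk h))
  · subst h
    unfold idxP at heq
    simp only at heq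
    have : i = k := by omega
    rw [this]
  · exact absurd heq.symm (Nat.ne_of_lt (idx_lt hk hkl hi h))

lemma idx_ge_one {n : ℕ} {q : ℕ × ℕ} (hq : q ∈ pairsF n) : 1 ≤ idxP q := by
  have hq' := Finset.mem_filter.mp hq
  have hqm := Finset.mem_product.mp hq'.1
  have := (Finset.mem_Icc.mp hqm.1).1
  unfold idxP
  omega

-- PART 7 : the main theorem

theorem chaos_RUC_system (p : ℝ≥0∞) (hp : 1 ≤ p) (hp' : p ≠ ∞) :
    ∃ C : ℝ, 0 < C ∧ ∀ n : ℕ, 2 ≤ n → ∀ a : ℕ → ℕ → ℝ,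
      (∫⁻ u, eLpNorm (fun t => ∑ i ∈ Finset.Icc 1 n, ∑ j ∈ Finset.Ioc i n,
          rho i j u * a i j * (rademacher i t * rademacher j t)) p lebI ∂lebI) ≤
        ENNReal.ofReal C *
          eLpNorm (fun t => ∑ i ∈ Finset.Icc 1 n, ∑ j ∈ Finset.Ioc i n,
            a i j * (rademacher i t * rademacher j t)) p lebI := by
  classical
  have hqr1 : 1 ≤ p.toReal := by
    rw [← ENNReal.toReal_one]
    exact ENNReal.toReal_mono hp' hp
  set m := ⌈p.toReal⌉₊ with hm
  have hm1 : 1 ≤ m := Nat.one_le_ceil_iff.mpr (by linarith)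
  have hmne : ((m:ℝ)) ≠ 0 := Nat.cast_ne_zero.mpr (by omega)
  set Km : ℝ := ((4:ℝ)^m)^m with hKm
  have hKmpos : 0 < Km := by positivity
  set r : ℝ := ((2*m : ℕ) : ℝ) with hr
  have hr2 : (2:ℝ) ≤ r := by
    rw [hr]
    push_cast
    have : (1:ℝ) ≤ (m:ℝ) := by exact_mod_cast hm1
    linarith
  have hrpos : 0 < r := by linarith
  have hrne : r ≠ 0 := ne_of_gt hrpos
  set c1 : ℝ := Km ^ ((1:ℝ)/r) with hc1
  have hc1pos : 0 < c1 := Real.rpow_pos_of_pos hKmpos _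
  refine ⟨c1 * 48, by positivity, ?_⟩
  intro n _ a
  set p2 : ℝ≥0∞ := ((2*m : ℕ) : ℝ≥0∞) with hp2
  have hp2z : p2 ≠ 0 := by
    rw [hp2]
    exact_mod_cast (by omega : (2*m : ℕ) ≠ 0)
  have hp2t : p2 ≠ ∞ := ENNReal.natCast_ne_top _
  have hp2r : p2.toReal = r := by
    rw [hp2, hr]
    exact ENNReal.toReal_natCast _
  have hple : p ≤ p2 := by
    conv_lhs => rw [← ENNReal.ofReal_toReal hp']
    rw [hp2, ← ENNReal.ofReal_natCast (2*m)]
    apply ENNReal.ofReal_le_ofReal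
    calc p.toReal ≤ (m:ℝ) := Nat.le_ceil _
      _ ≤ ((2*m:ℕ):ℝ) := by
          push_cast
          have : (0:ℝ) ≤ (m:ℝ) := Nat.cast_nonneg m
          linarith
  have hfr : (fun t => ∑ i ∈ Finset.Icc 1 n, ∑ j ∈ Finset.Ioc i n,
      a i j * (rademacher i t * rademacher j t)) = Ffun a n := funext (Ffun_eq a n)
  rw [hfr]
  rw [show (fun u => eLpNorm (fun t => ∑ i ∈ Finset.Icc 1 n, ∑ j ∈ Finset.Ioc i n,
      rho i j u * a i j * (rademacher i t * rademacher j t)) p lebI)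
      = fun u => eLpNorm (Ffun (fun i j => rho i j u * a i j) n) p lebI from
    funext fun u => by rw [funext (Ffun_eq (fun i j => rho i j u * a i j) n)]]
  -- measurability of the kernel
  have hFm : Measurable (fun z : ℝ × ℝ => Ffun (fun i j => rho i j z.1 * a i j) n z.2) := by
    unfold Ffun gfun rho
    apply Finset.measurable_sum
    intro j _
    apply Measurable.mul ((rademacher_meas j).comp measurable_snd)
    apply Finset.measurable_sum
    intro i _
    exact (((rademacher_meas _).comp measurable_fst).mul_const _).mul
      ((rademacher_meas i).comp measurable_snd)
  have hGm : Measurable (fun z : ℝ × ℝ =>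
      ((‖Ffun (fun i j => rho i j z.1 * a i j) n z.2‖₊ : ℝ≥0∞)) ^ r) :=
    ENNReal.continuous_rpow_const.measurable.comp hFm.nnnorm.coe_nnreal_ennreal
  set Ψ : ℝ → ℝ≥0∞ :=
    fun u => ∫⁻ t, (‖Ffun (fun i j => rho i j u * a i j) n t‖₊ : ℝ≥0∞) ^ r ∂lebI with hΨ
  have hΨm : Measurable Ψ := Measurable.lintegral_prod_right hGm
  have hels : ∀ u : ℝ, eLpNorm (Ffun (fun i j => rho i j u * a i j) n) p2 lebI
      = (Ψ u) ^ ((1:ℝ)/r) := by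
    intro u
    rw [eLpNorm_eq_lintegral_rpow_enorm_toReal hp2z hp2t, hp2r]
    rfl
  have hconj : Real.HolderConjugate r (r/(r-1)) :=
    Real.HolderConjugate.conjExponent (by linarith)
  have hmeaspow : AEMeasurable (fun u => (Ψ u) ^ ((1:ℝ)/r)) lebI :=
    (ENNReal.continuous_rpow_const.measurable.comp hΨm).aemeasurable
  have hjensen : ∫⁻ u, (Ψ u) ^ ((1:ℝ)/r) ∂lebI ≤ (∫⁻ u, Ψ u ∂lebI) ^ ((1:ℝ)/r) := by
    have hH := ENNReal.lintegral_mul_le_Lp_mul_Lq lebI hconj hmeaspow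
      (aemeasurable_const (b := (1:ℝ≥0∞)))
    simp only [Pi.mul_apply, mul_one, ENNReal.one_rpow, lintegral_one, measure_univ,
      ENNReal.one_rpow] at hH
    rw [show (fun u => ((Ψ u)^((1:ℝ)/r))^r) = fun u => Ψ u from funext fun u => by
      rw [← ENNReal.rpow_mul, one_div_mul_cancel hrne, ENNReal.rpow_one]] at hH
    simpa using hH
  have hswap : ∫⁻ u, Ψ u ∂lebI
      = ∫⁻ t, ∫⁻ u, (‖Ffun (fun i j => rho i j u * a i j) n t‖₊ : ℝ≥0∞) ^ r ∂lebI ∂lebI :=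
    lintegral_lintegral_swap hGm.aemeasurable
  set S2 := Sig a n with hS2
  have hS2nn : 0 ≤ S2 := Sig_nonneg a n
  have hinner : ∀ t : ℝ,
      (∫⁻ u, (‖Ffun (fun i j => rho i j u * a i j) n t‖₊ : ℝ≥0∞) ^ r ∂lebI)
      ≤ ENNReal.ofReal (Km * S2^m) := by
    intro t
    have hpt : ∀ u : ℝ, (‖Ffun (fun i j => rho i j u * a i j) n t‖₊ : ℝ≥0∞) ^ r
        = ENNReal.ofReal ((∑ q ∈ pairsF n,
            (a q.1 q.2 * (rademacher q.1 t * rademacher q.2 t)) * rademacher (idxP q) u)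
            ^ (2*m)) := by
      intro u
      have hbase : Ffun (fun i j => rho i j u * a i j) n t = ∑ q ∈ pairsF n,
          (a q.1 q.2 * (rademacher q.1 t * rademacher q.2 t)) * rademacher (idxP q) u := by
        rw [← Ffun_eq (fun i j => rho i j u * a i j) n t, ← pair_sum n (fun i j =>
          rho i j u * a i j * (rademacher i t * rademacher j t))]
        apply Finset.sum_congr rfl
        intro q _
        rw [rho_eq_idxP]
        ring
      rw [← enorm_eq_nnnorm, Real.enorm_eq_ofReal_abs, hr,
        ENNReal.ofReal_rpow_of_nonneg (abs_nonneg _) (by positivity),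
        Real.rpow_natCast, Even.pow_abs ⟨m, by ring⟩, hbase]
    rw [show (fun u => (‖Ffun (fun i j => rho i j u * a i j) n t‖₊ : ℝ≥0∞) ^ r) = fun u =>
        ENNReal.ofReal ((∑ q ∈ pairsF n, (a q.1 q.2 * (rademacher q.1 t * rademacher q.2 t))
          * rademacher (idxP q) u) ^ (2*m)) from funext hpt]
    have hbddu : Bdd (fun u => (∑ q ∈ pairsF n,
        (a q.1 q.2 * (rademacher q.1 t * rademacher q.2 t)) * rademacher (idxP q) u) ^ (2*m)) :=
      (Bdd.sum _ _ fun q _ => (Bdd.const _).mul (rademacher_bdd _)).pow (2*m)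
    rw [← ofReal_integral_eq_lintegral_ofReal hbddu.integrable
      (ae_of_all _ fun u => Even.pow_nonneg ⟨m, by ring⟩ _)]
    apply ENNReal.ofReal_le_ofReal
    have hkh := khintchine_gen (ι := ℕ × ℕ) m (pairsF n).card (pairsF n) rfl idxP
      (fun q => a q.1 q.2 * (rademacher q.1 t * rademacher q.2 t)) (idx_injOn n)
      (fun q hq => idx_ge_one hq) m (le_refl m)
    have hsq : ∑ q ∈ pairsF n, (a q.1 q.2 * (rademacher q.1 t * rademacher q.2 t))^2 = S2 := by
      rw [hS2, Sig_eq, ← pair_sum n (fun i j => (a i j)^2)]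
      apply Finset.sum_congr rfl
      intro q _
      rw [mul_pow, mul_pow, rademacher_sq, rademacher_sq]
      ring
    rw [hsq] at hkh
    exact hkh
  have hconst : ∫⁻ (_t : ℝ), ENNReal.ofReal (Km * S2^m) ∂lebI = ENNReal.ofReal (Km * S2^m) := by
    rw [lintegral_const, measure_univ, mul_one]
  have hLHS : ∫⁻ u, eLpNorm (Ffun (fun i j => rho i j u * a i j) n) p lebI ∂lebI
      ≤ ENNReal.ofReal (c1 * Real.sqrt S2) := by
    calc ∫⁻ u, eLpNorm (Ffun (fun i j => rho i j u * a i j) n) p lebI ∂lebI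
        ≤ ∫⁻ u, (Ψ u) ^ ((1:ℝ)/r) ∂lebI := by
          apply lintegral_mono
          intro u
          calc eLpNorm (Ffun (fun i j => rho i j u * a i j) n) p lebI
              ≤ eLpNorm (Ffun (fun i j => rho i j u * a i j) n) p2 lebI :=
                eLpNorm_le_eLpNorm_of_exponent_le hple
                  (Ffun_bdd _ n).meas.aestronglyMeasurable
            _ = (Ψ u) ^ ((1:ℝ)/r) := hels u
      _ ≤ (∫⁻ u, Ψ u ∂lebI) ^ ((1:ℝ)/r) := hjensen
      _ ≤ (ENNReal.ofReal (Km * S2^m)) ^ ((1:ℝ)/r) := by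
          apply ENNReal.rpow_le_rpow ?_ (by positivity)
          rw [hswap]
          calc ∫⁻ t, ∫⁻ u, (‖Ffun (fun i j => rho i j u * a i j) n t‖₊ : ℝ≥0∞) ^ r ∂lebI ∂lebI
              ≤ ∫⁻ (_t : ℝ), ENNReal.ofReal (Km * S2^m) ∂lebI := lintegral_mono fun t => hinner t
            _ = ENNReal.ofReal (Km * S2^m) := hconst
      _ = ENNReal.ofReal (c1 * Real.sqrt S2) := by
          rw [ENNReal.ofReal_rpow_of_nonneg (by positivity) (by positivity)]
          congr 1
          rw [Real.mul_rpow (le_of_lt hKmpos) (by positivity)]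
          congr 1
          rw [← Real.rpow_natCast S2 m, ← Real.rpow_mul hS2nn, Real.sqrt_eq_rpow]
          congr 1
          rw [hr]
          push_cast
          field_simp
  have hA : eLpNorm (Ffun a n) 1 lebI = ENNReal.ofReal (∫ t, |Ffun a n t| ∂lebI) := by
    rw [eLpNorm_one_eq_lintegral_enorm]
    rw [show (fun t => ‖Ffun a n t‖ₑ) = fun t => ENNReal.ofReal |Ffun a n t| from
      funext fun t => Real.enorm_eq_ofReal_abs _]
    exact (ofReal_integral_eq_lintegral_ofReal (Ffun_bdd a n).abs.integrable
      (ae_of_all _ fun t => abs_nonneg _)).symm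
  have hfinal : ENNReal.ofReal (c1 * Real.sqrt S2)
      ≤ ENNReal.ofReal (c1 * 48) * eLpNorm (Ffun a n) p lebI := by
    have hL1 : Real.sqrt S2 ≤ 48 * ∫ t, |Ffun a n t| ∂lebI := Ffun_L1 a n
    calc ENNReal.ofReal (c1 * Real.sqrt S2)
        ≤ ENNReal.ofReal (c1 * (48 * ∫ t, |Ffun a n t| ∂lebI)) :=
          ENNReal.ofReal_le_ofReal (mul_le_mul_of_nonneg_left hL1 (le_of_lt hc1pos))
      _ = ENNReal.ofReal (c1 * 48) * ENNReal.ofReal (∫ t, |Ffun a n t| ∂lebI) := by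
          rw [show c1 * (48 * ∫ t, |Ffun a n t| ∂lebI)
              = (c1 * 48) * ∫ t, |Ffun a n t| ∂lebI from by ring,
            ENNReal.ofReal_mul (by positivity)]
      _ = ENNReal.ofReal (c1 * 48) * eLpNorm (Ffun a n) 1 lebI := by rw [hA]
      _ ≤ ENNReal.ofReal (c1 * 48) * eLpNorm (Ffun a n) p lebI :=
          mul_le_mul_right (eLpNorm_le_eLpNorm_of_exponent_le hp
            (Ffun_bdd a n).meas.aestronglyMeasurable) _
  exact le_trans hLHS hfinal
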